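/- For the tuned localizer L_λ^κ = σ₁⊗κ(A₁-λ₁) + σ₂⊗κ(A₂-λ₂) + σ₃⊗(A₃-λ₃), if L_λ^κ has an eigenvalue with absolute value ≤ μ, then there exists a unit vector v̂ with ‖(A₃-λ₃)v̂‖ ≤ (μ² + (κ²+2κ)δ)^{1/2} and ‖(Aᵢ-λᵢ)v̂‖ ≤ ((μ/κ)² + (1+2/κ)δ)^{1/2} for i = 1,2. -/

import Mathlib

open Matrix
open scoped Kronecker Matrix.Norms.L2Operator

set_option maxHeartbeats 2000000
noncomputable section

def pauli1 : Matrix (Fin 2) (Fin 2) ℂ := !![0, 1; 1, 0]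
def pauli2 : Matrix (Fin 2) (Fin 2) ℂ := !![0, -Complex.I; Complex.I, 0]
def pauli3 : Matrix (Fin 2) (Fin 2) ℂ := !![1, 0; 0, -1]


/-- The tuned spectral localizer with tuning parameter κ. -/
def tunedLocalizer {N : ℕ} (κ : ℝ) (A₁ A₂ A₃ : Matrix (Fin N) (Fin N) ℂ) (lam : Fin 3 → ℝ) :
    Matrix (Fin 2 × Fin N) (Fin 2 × Fin N) ℂ :=
  pauli1 ⊗ₖ ((κ : ℂ) • (A₁ - (lam 0 : ℂ) • 1)) + pauli2 ⊗ₖ ((κ : ℂ) • (A₂ - (lam 1 : ℂ) • 1))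
    + pauli3 ⊗ₖ (A₃ - (lam 2 : ℂ) • 1)

/-! ### Auxiliary lemmas -/

section InnerHelpers

open scoped ComplexConjugate

variable {E : Type*} [NormedAddCommGroup E] [InnerProductSpace ℂ E]

local notation "⟪" x ", " y "⟫" => @inner ℂ _ _ x y

private lemma norm_sq_expand' (x y z : E) : ‖x + y + z‖^2 =
    ‖x‖^2 + ‖y‖^2 + ‖z‖^2 + 2 * (⟪x,y⟫).re + 2 * (⟪x,z⟫).re + 2 * (⟪y,z⟫).re := by
  have h1 := @norm_add_sq ℂ E _ _ _ (x + y) z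
  have h2 := @norm_add_sq ℂ E _ _ _ x y
  simp only [RCLike.re_to_complex] at h1 h2
  rw [h1, h2, inner_add_left]
  simp [Complex.add_re]; ring

private lemma key_expand' (k : ℝ) (p q r : E) :
    ‖(k:ℂ) • p + ((Complex.I * k)) • q + r‖^2 = k^2*‖p‖^2 + k^2*‖q‖^2 + ‖r‖^2
      - 2*k^2*(⟪p,q⟫).im + 2*k*(⟪p,r⟫).re + 2*k*(⟪q,r⟫).im := by
  rw [norm_sq_expand']
  simp only [inner_smul_left, inner_smul_right, norm_smul]
  simp only [_root_.map_mul, Complex.conj_I, Complex.conj_ofReal, Complex.mul_re, Complex.mul_im,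
    Complex.I_re, Complex.I_im, Complex.ofReal_re, Complex.ofReal_im, Complex.neg_re,
    Complex.neg_im, norm_mul, Complex.norm_I, Complex.norm_real, Real.norm_eq_abs]
  nlinarith [sq_abs k, sq_nonneg k]

variable [CompleteSpace E]

private lemma sa_move' (S : E →L[ℂ] E) (hS : IsSelfAdjoint S) (x y : E) : ⟪S x, y⟫ = ⟪x, S y⟫ :=
  hS.isSymmetric x y

private lemma comm_inner_eq' (S T : E →L[ℂ] E) (hS : IsSelfAdjoint S) (hT : IsSelfAdjoint T)
    (x y : E) : ⟪x, (S * T - T * S) y⟫ = ⟪S x, T y⟫ - conj ⟪S y, T x⟫ := by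
  have h1 : ⟪S x, T y⟫ = ⟪x, (S * T) y⟫ := by rw [sa_move' S hS]; rfl
  have h2 : conj ⟪S y, T x⟫ = ⟪x, (T * S) y⟫ := by
    rw [inner_conj_symm, sa_move' T hT]; rfl
  rw [ContinuousLinearMap.sub_apply, inner_sub_right, h1, h2]

omit [CompleteSpace E] in
private lemma comm_inner_bound' (S T : E →L[ℂ] E) (x y : E) :
    ‖⟪x, (S * T - T * S) y⟫‖ ≤ ‖S * T - T * S‖ * (‖x‖ * ‖y‖) := by
  calc ‖⟪x, (S * T - T * S) y⟫‖ ≤ ‖x‖ * ‖(S * T - T * S) y‖ := norm_inner_le_norm _ _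
    _ ≤ ‖x‖ * (‖S * T - T * S‖ * ‖y‖) := by
        gcongr; exact (S * T - T * S).le_opNorm y
    _ = ‖S * T - T * S‖ * (‖x‖ * ‖y‖) := by ring

private lemma im_self_bound' (S T : E →L[ℂ] E) (hS : IsSelfAdjoint S) (hT : IsSelfAdjoint T)
    (x : E) : 2 * |(⟪S x, T x⟫).im| ≤ ‖S * T - T * S‖ * ‖x‖^2 := by
  have he := comm_inner_eq' S T hS hT x x
  have h2 : ⟪S x, T x⟫ - conj ⟪S x, T x⟫ = ((2 * (⟪S x, T x⟫).im : ℝ) : ℂ) * Complex.I :=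
    Complex.sub_conj _
  have hb := comm_inner_bound' S T x x
  rw [he, h2] at hb
  have hn : ‖(((2 * (⟪S x, T x⟫).im : ℝ) : ℂ)) * Complex.I‖ = 2 * |(⟪S x, T x⟫).im| := by
    simp [abs_mul]
  rw [hn] at hb
  calc 2 * |(⟪S x, T x⟫).im| ≤ ‖S * T - T * S‖ * (‖x‖ * ‖x‖) := hb
    _ = ‖S * T - T * S‖ * ‖x‖^2 := by ring

private lemma re_cross_bound' (S T : E →L[ℂ] E) (hS : IsSelfAdjoint S) (hT : IsSelfAdjoint T)
    (x y : E) : |(⟪S x, T y⟫).re - (⟪S y, T x⟫).re| ≤ ‖S * T - T * S‖ * (‖x‖ * ‖y‖) := by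
  have he := comm_inner_eq' S T hS hT x y
  have hb := comm_inner_bound' S T x y
  rw [he] at hb
  have h : (⟪S x, T y⟫ - conj ⟪S y, T x⟫).re = (⟪S x, T y⟫).re - (⟪S y, T x⟫).re := by
    rw [Complex.sub_re, Complex.conj_re]
  calc |(⟪S x, T y⟫).re - (⟪S y, T x⟫).re| = |(⟪S x, T y⟫ - conj ⟪S y, T x⟫).re| := by rw [h]
    _ ≤ ‖⟪S x, T y⟫ - conj ⟪S y, T x⟫‖ := Complex.abs_re_le_norm _
    _ ≤ _ := hb

private lemma im_cross_bound' (S T : E →L[ℂ] E) (hS : IsSelfAdjoint S) (hT : IsSelfAdjoint T)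
    (x y : E) : |(⟪S x, T y⟫).im + (⟪S y, T x⟫).im| ≤ ‖S * T - T * S‖ * (‖x‖ * ‖y‖) := by
  have he := comm_inner_eq' S T hS hT x y
  have hb := comm_inner_bound' S T x y
  rw [he] at hb
  have h : (⟪S x, T y⟫ - conj ⟪S y, T x⟫).im = (⟪S x, T y⟫).im + (⟪S y, T x⟫).im := by
    rw [Complex.sub_im, Complex.conj_im, sub_neg_eq_add]
  calc |(⟪S x, T y⟫).im + (⟪S y, T x⟫).im| = |(⟪S x, T y⟫ - conj ⟪S y, T x⟫).im| := by rw [h]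
    _ ≤ ‖⟪S x, T y⟫ - conj ⟪S y, T x⟫‖ := Complex.abs_im_le_norm _
    _ ≤ _ := hb

end InnerHelpers

private lemma kron_mulVec' {N : ℕ} (P : Matrix (Fin 2) (Fin 2) ℂ) (M : Matrix (Fin N) (Fin N) ℂ)
    (u : Fin 2 × Fin N → ℂ) (a : Fin 2) (j : Fin N) :
    (P ⊗ₖ M).mulVec u (a, j) =
      P a 0 * M.mulVec (fun i => u (0, i)) j + P a 1 * M.mulVec (fun i => u (1, i)) j := by
  simp only [Matrix.mulVec, dotProduct, Fintype.sum_prod_type, Fin.sum_univ_two,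
    kroneckerMap_apply, Finset.mul_sum]
  congr 1 <;> exact Finset.sum_congr rfl fun i _ => by ring

private lemma sq_le_rpow_half' {x b : ℝ} (hx : 0 ≤ x) (h : x^2 ≤ b) : x ≤ b ^ ((1:ℝ)/2) := by
  calc x = (x^2) ^ ((1:ℝ)/2) := by
        rw [← Real.rpow_natCast x 2, ← Real.rpow_mul hx]; norm_num
    _ ≤ b ^ ((1:ℝ)/2) := Real.rpow_le_rpow (sq_nonneg x) h (by norm_num)


private lemma arith_main' (κ δ c μ n0 n1 a0 b0 r0 a1 b1 r1 I0 I1 RA RB IA IB : ℝ)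
    (hκ : 0 < κ) (hδ : 0 < δ) (hc : |c| ≤ μ)
    (hn0 : 0 ≤ n0) (hn1 : 0 ≤ n1)
    (n0eq : (|c| * n0) ^ 2 = κ^2 * a1^2 + κ^2 * b1^2 + r0^2 - 2*κ^2*(-I1) + 2*κ*RA + 2*κ*(-IA))
    (n1eq : (|c| * n1) ^ 2 = κ^2 * a0^2 + κ^2 * b0^2 + r1^2 - 2*κ^2*I0 + 2*κ*(-RB) + 2*κ*(-IB))
    (hbI1 : 2 * |I1| ≤ δ * n1^2) (hbI0 : 2 * |I0| ≤ δ * n0^2)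
    (hbR : |RA - RB| ≤ δ * (n1 * n0)) (hbI : |IA + IB| ≤ δ * (n1 * n0)) :
    κ^2*a0^2 + κ^2*b0^2 + r0^2 + κ^2*a1^2 + κ^2*b1^2 + r1^2
      ≤ (μ^2 + (κ^2 + 2*κ) * δ) * (n0^2 + n1^2) := by
  have hc2 : c^2 ≤ μ^2 := by nlinarith [abs_nonneg c, sq_abs c]
  have habs1 := abs_le.mp hbR
  have habs2 := abs_le.mp hbI
  have hk2 : (0:ℝ) ≤ κ^2 := sq_nonneg κ
  have hκ' : (0:ℝ) ≤ 2*κ := by linarith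
  have hI1l : -(δ * n1^2) ≤ 2*I1 := by nlinarith [neg_abs_le I1]
  have hI0u : 2*I0 ≤ δ * n0^2 := by nlinarith [le_abs_self I0]
  have hprod1' : κ^2 * (-(δ * n1^2)) ≤ κ^2 * (2*I1) := mul_le_mul_of_nonneg_left hI1l hk2
  have hprod0 : κ^2 * (2*I0) ≤ κ^2 * (δ * n0^2) := mul_le_mul_of_nonneg_left hI0u hk2
  have hprodR' : 2*κ * (-(δ * (n1 * n0))) ≤ 2*κ * (RA - RB) :=
    mul_le_mul_of_nonneg_left habs1.1 hκ'
  have hprodI : 2*κ * (IA + IB) ≤ 2*κ * (δ * (n1 * n0)) :=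
    mul_le_mul_of_nonneg_left habs2.2 hκ'
  have hcross : 2 * (n1 * n0) ≤ n0^2 + n1^2 := by nlinarith [sq_nonneg (n0 - n1)]
  have hprodC : 2*κ*δ * (2 * (n1 * n0)) ≤ 2*κ*δ * (n0^2 + n1^2) :=
    mul_le_mul_of_nonneg_left hcross (by positivity)
  have hcs : c^2 * (n0^2 + n1^2) ≤ μ^2 * (n0^2 + n1^2) :=
    mul_le_mul_of_nonneg_right hc2 (by positivity)
  nlinarith [n0eq, n1eq, sq_abs c]

theorem tuned_localizer_approx_eigenvector {N : ℕ}
    (A : Fin 3 → Matrix (Fin N) (Fin N) ℂ) (hA : ∀ j, (A j).IsHermitian)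
    (δ : ℝ) (hδpos : 0 < δ) (hδ : ∀ i j, ‖⁅A i, A j⁆‖ ≤ δ)
    (κ : ℝ) (hκ : 0 < κ) (μ : ℝ) (hμ : 0 ≤ μ) (lam : Fin 3 → ℝ)
    (hpseudo : ∃ (c : ℝ), |c| ≤ μ ∧ ∃ u : Fin 2 × Fin N → ℂ, u ≠ 0 ∧
      (tunedLocalizer κ (A 0) (A 1) (A 2) lam).mulVec u = (c : ℂ) • u) :
    ∃ v : EuclideanSpace ℂ (Fin N), ‖v‖ = 1 ∧
      ‖((WithLp.equiv 2 (Fin N → ℂ)).symm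
          ((A 2 - (lam 2 : ℂ) • 1).mulVec v))‖ ≤ (μ ^ 2 + (κ ^ 2 + 2 * κ) * δ) ^ ((1 : ℝ)/2) ∧
      ∀ i, i ≠ 2 →
        ‖((WithLp.equiv 2 (Fin N → ℂ)).symm
          ((A i - (lam i : ℂ) • 1).mulVec v))‖ ≤ ((μ / κ) ^ 2 + (1 + 2 / κ) * δ) ^ ((1 : ℝ)/2) := by
  obtain ⟨c, hc, u, hu, heig⟩ := hpseudo
  set B : Fin 3 → Matrix (Fin N) (Fin N) ℂ := fun i => A i - (lam i : ℂ) • 1 with hBdef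
  set T : Fin 3 → (EuclideanSpace ℂ (Fin N) →L[ℂ] EuclideanSpace ℂ (Fin N)) :=
    fun i => Matrix.toEuclideanCLM (𝕜 := ℂ) (B i) with hTdef
  have hBH : ∀ i, (B i).IsHermitian := by
    intro i
    apply (hA i).sub
    unfold Matrix.IsHermitian
    rw [Matrix.conjTranspose_smul, Matrix.conjTranspose_one]
    norm_num
  have hTsa : ∀ i, _root_.IsSelfAdjoint (T i) := by
    intro i
    show _root_.IsSelfAdjoint (Matrix.toEuclideanCLM (𝕜 := ℂ) (B i))
    rw [_root_.IsSelfAdjoint, ← map_star]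
    exact congrArg _ (hBH i)
  have hcomm : ∀ i j, ‖T i * T j - T j * T i‖ ≤ δ := by
    intro i j
    have h1 : T i * T j - T j * T i = Matrix.toEuclideanCLM (𝕜 := ℂ) ⁅B i, B j⁆ := by
      show Matrix.toEuclideanCLM (𝕜 := ℂ) (B i) * Matrix.toEuclideanCLM (𝕜 := ℂ) (B j)
        - Matrix.toEuclideanCLM (𝕜 := ℂ) (B j) * Matrix.toEuclideanCLM (𝕜 := ℂ) (B i)
        = Matrix.toEuclideanCLM (𝕜 := ℂ) ⁅B i, B j⁆
      simp [Ring.lie_def, map_sub, _root_.map_mul]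
    have h2 : ⁅B i, B j⁆ = ⁅A i, A j⁆ := by
      show ⁅A i - (lam i : ℂ) • 1, A j - (lam j : ℂ) • 1⁆ = ⁅A i, A j⁆
      simp only [Ring.lie_def, sub_mul, mul_sub, Matrix.smul_mul, Matrix.mul_smul,
        Matrix.one_mul, Matrix.mul_one, smul_smul]
      rw [mul_comm ((lam j : ℂ)) ((lam i : ℂ))]
      abel
    rw [h1, ← Matrix.cstar_norm_def, h2]
    exact hδ i j
  set w₀ : EuclideanSpace ℂ (Fin N) := (WithLp.equiv 2 (Fin N → ℂ)).symm (fun j => u (0, j))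
    with hw₀
  set w₁ : EuclideanSpace ℂ (Fin N) := (WithLp.equiv 2 (Fin N → ℂ)).symm (fun j => u (1, j))
    with hw₁
  have hT_apply : ∀ i (x : Fin N → ℂ),
      T i ((WithLp.equiv 2 (Fin N → ℂ)).symm x)
        = (WithLp.equiv 2 (Fin N → ℂ)).symm ((B i).mulVec x) := by
    intro i x
    show Matrix.toEuclideanCLM (𝕜 := ℂ) (B i) ((WithLp.equiv 2 (Fin N → ℂ)).symm x) = _
    exact Matrix.toEuclideanCLM_toLp _ _
  have eq0 : (κ:ℂ) • T 0 w₁ + (Complex.I * (κ:ℝ)) • (-(T 1 w₁)) + T 2 w₀ = (c:ℂ) • w₀ := by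
    rw [hw₀, hw₁]
    simp only [hT_apply]
    simp only [WithLp.equiv_symm_apply, ← WithLp.toLp_smul, ← WithLp.toLp_neg,
      ← WithLp.toLp_add]
    refine congrArg _ ?_
    funext j
    have h0 := congrFun heig (0, j)
    simp only [tunedLocalizer, Matrix.add_mulVec, Pi.add_apply, kron_mulVec',
      Matrix.smul_mulVec, Pi.smul_apply, smul_eq_mul] at h0
    simp only [pauli1, pauli2, pauli3, Matrix.of_apply, Matrix.cons_val_zero, Matrix.cons_val_one,
      Matrix.head_cons, zero_mul, one_mul, mul_zero, mul_one, add_zero, zero_add, neg_mul,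
      mul_neg, neg_neg, neg_zero] at h0
    simp only [hBdef, Pi.add_apply, Pi.smul_apply, Pi.neg_apply, smul_eq_mul]
    linear_combination h0
  have eq1 : (κ:ℂ) • T 0 w₀ + (Complex.I * (κ:ℝ)) • (T 1 w₀) + (-(T 2 w₁)) = (c:ℂ) • w₁ := by
    rw [hw₀, hw₁]
    simp only [hT_apply]
    simp only [WithLp.equiv_symm_apply, ← WithLp.toLp_smul, ← WithLp.toLp_neg,
      ← WithLp.toLp_add]
    refine congrArg _ ?_
    funext j
    have h1 := congrFun heig (1, j)
    simp only [tunedLocalizer, Matrix.add_mulVec, Pi.add_apply, kron_mulVec',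
      Matrix.smul_mulVec, Pi.smul_apply, smul_eq_mul] at h1
    simp only [pauli1, pauli2, pauli3, Matrix.of_apply, Matrix.cons_val_zero, Matrix.cons_val_one,
      Matrix.head_cons, zero_mul, one_mul, mul_zero, mul_one, add_zero, zero_add, neg_mul,
      mul_neg, neg_neg, neg_zero] at h1
    simp only [hBdef, Pi.add_apply, Pi.smul_apply, Pi.neg_apply, smul_eq_mul]
    linear_combination h1
  clear_value B T w₀ w₁
  have n0eq := key_expand' κ (T 0 w₁) (-(T 1 w₁)) (T 2 w₀)
  rw [eq0] at n0eq
  have n1eq := key_expand' κ (T 0 w₀) (T 1 w₀) (-(T 2 w₁))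
  rw [eq1] at n1eq
  simp only [norm_neg, inner_neg_left, inner_neg_right, Complex.neg_im, Complex.neg_re,
    norm_smul, Complex.norm_real, Real.norm_eq_abs] at n0eq n1eq
  set I1 : ℝ := (@inner ℂ _ _ (T 0 w₁) (T 1 w₁)).im with hI1def
  set I0 : ℝ := (@inner ℂ _ _ (T 0 w₀) (T 1 w₀)).im with hI0def
  set RA : ℝ := (@inner ℂ _ _ (T 0 w₁) (T 2 w₀)).re with hRAdef
  set RB : ℝ := (@inner ℂ _ _ (T 0 w₀) (T 2 w₁)).re with hRBdef
  set IA : ℝ := (@inner ℂ _ _ (T 1 w₁) (T 2 w₀)).im with hIAdef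
  set IB : ℝ := (@inner ℂ _ _ (T 1 w₀) (T 2 w₁)).im with hIBdef
  have hbI1 : 2 * |I1| ≤ δ * ‖w₁‖^2 := by
    refine le_trans (im_self_bound' (T 0) (T 1) (hTsa 0) (hTsa 1) w₁) ?_
    exact mul_le_mul_of_nonneg_right (hcomm 0 1) (sq_nonneg _)
  have hbI0 : 2 * |I0| ≤ δ * ‖w₀‖^2 := by
    refine le_trans (im_self_bound' (T 0) (T 1) (hTsa 0) (hTsa 1) w₀) ?_
    exact mul_le_mul_of_nonneg_right (hcomm 0 1) (sq_nonneg _)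
  have hbR : |RA - RB| ≤ δ * (‖w₁‖ * ‖w₀‖) := by
    refine le_trans (re_cross_bound' (T 0) (T 2) (hTsa 0) (hTsa 2) w₁ w₀) ?_
    exact mul_le_mul_of_nonneg_right (hcomm 0 2) (by positivity)
  have hbI : |IA + IB| ≤ δ * (‖w₁‖ * ‖w₀‖) := by
    refine le_trans (im_cross_bound' (T 1) (T 2) (hTsa 1) (hTsa 2) w₁ w₀) ?_
    exact mul_le_mul_of_nonneg_right (hcomm 1 2) (by positivity)
  clear_value I1 I0 RA RB IA IB
  set ε2 : ℝ := μ^2 + (κ^2 + 2*κ) * δ with hε2def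
  have hkey : κ^2*‖T 0 w₀‖^2 + κ^2*‖T 1 w₀‖^2 + ‖T 2 w₀‖^2
      + κ^2*‖T 0 w₁‖^2 + κ^2*‖T 1 w₁‖^2 + ‖T 2 w₁‖^2 ≤ ε2 * (‖w₀‖^2 + ‖w₁‖^2) := by
    rw [hε2def]
    exact arith_main' κ δ c μ ‖w₀‖ ‖w₁‖ ‖T 0 w₀‖ ‖T 1 w₀‖ ‖T 2 w₀‖ ‖T 0 w₁‖ ‖T 1 w₁‖ ‖T 2 w₁‖
      I0 I1 RA RB IA IB hκ hδpos hc (norm_nonneg _) (norm_nonneg _)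
      n0eq n1eq hbI1 hbI0 hbR hbI
  clear heig eq0 eq1 n0eq n1eq hbI1 hbI0 hbR hbI hTsa hcomm hBH hA hδ hc
  clear hI1def hI0def hRAdef hRBdef hIAdef hIBdef I1 I0 RA RB IA IB
  have hs : 0 < ‖w₀‖^2 + ‖w₁‖^2 := by
    rcases eq_or_lt_of_le (by positivity : (0:ℝ) ≤ ‖w₀‖^2 + ‖w₁‖^2) with h | h
    · exfalso
      apply hu
      have h0sq : ‖w₀‖^2 = 0 := le_antisymm (by nlinarith [sq_nonneg ‖w₁‖]) (sq_nonneg _)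
      have h1sq : ‖w₁‖^2 = 0 := le_antisymm (by nlinarith [sq_nonneg ‖w₀‖]) (sq_nonneg _)
      have hz0 : w₀ = 0 := norm_eq_zero.mp (sq_eq_zero_iff.mp h0sq)
      have hz1 : w₁ = 0 := norm_eq_zero.mp (sq_eq_zero_iff.mp h1sq)
      have hf0 : ∀ j, u (0, j) = 0 := by
        intro j
        have := congrFun (congrArg (WithLp.equiv 2 (Fin N → ℂ)) hz0) j
        simpa [hw₀] using this
      have hf1 : ∀ j, u (1, j) = 0 := by
        intro j
        have := congrFun (congrArg (WithLp.equiv 2 (Fin N → ℂ)) hz1) j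
        simpa [hw₁] using this
      funext x
      obtain ⟨a, j⟩ := x
      fin_cases a
      · exact hf0 j
      · exact hf1 j
    · exact h
  have hsel : ∃ z : EuclideanSpace ℂ (Fin N), ‖z‖ ≠ 0 ∧
      κ^2*‖T 0 z‖^2 + κ^2*‖T 1 z‖^2 + ‖T 2 z‖^2 ≤ ε2 * ‖z‖^2 := by
    by_cases h0 : ‖w₀‖ = 0
    · refine ⟨w₁, ?_, ?_⟩
      · intro h1
        rw [h0, h1] at hs
        norm_num at hs
      · have hz0 : w₀ = 0 := norm_eq_zero.mp h0
        have e0 : ‖T 0 w₀‖ = 0 := by rw [hz0, map_zero, norm_zero]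
        have e1 : ‖T 1 w₀‖ = 0 := by rw [hz0, map_zero, norm_zero]
        have e2 : ‖T 2 w₀‖ = 0 := by rw [hz0, map_zero, norm_zero]
        have h0sq : ‖w₀‖^2 = 0 := by rw [h0]; ring
        rw [e0, e1, e2, h0sq] at hkey
        calc κ^2*‖T 0 w₁‖^2 + κ^2*‖T 1 w₁‖^2 + ‖T 2 w₁‖^2
            ≤ ε2 * (0 + ‖w₁‖^2) := by linarith [hkey]
          _ = ε2 * ‖w₁‖^2 := by ring
    · by_cases hf : κ^2*‖T 0 w₀‖^2 + κ^2*‖T 1 w₀‖^2 + ‖T 2 w₀‖^2 ≤ ε2 * ‖w₀‖^2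
      · exact ⟨w₀, h0, hf⟩
      · push_neg at hf
        refine ⟨w₁, ?_, ?_⟩
        · intro h1
          have h1sq : ‖w₁‖^2 = 0 := by rw [h1]; ring
          have hpos : (0:ℝ) ≤ κ^2*‖T 0 w₁‖^2 + κ^2*‖T 1 w₁‖^2 + ‖T 2 w₁‖^2 := by positivity
          rw [h1sq] at hkey
          nlinarith [hkey, hf, hpos]
        · nlinarith [hkey, hf]
  obtain ⟨z, hz, hz2⟩ := hsel
  have hznorm : 0 < ‖z‖ := lt_of_le_of_ne (norm_nonneg z) (Ne.symm hz)
  have hinv : ‖z‖⁻¹ * ‖z‖ = 1 := inv_mul_cancel₀ (ne_of_gt hznorm)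
  set v : EuclideanSpace ℂ (Fin N) := (((‖z‖:ℝ)⁻¹ : ℂ)) • z with hvdef
  have hveq : ∀ i : Fin 3,
      (WithLp.equiv 2 (Fin N → ℂ)).symm ((A i - (lam i : ℂ) • 1).mulVec v) = T i v := by
    intro i
    have h := hT_apply i (WithLp.equiv 2 (Fin N → ℂ) v)
    have h2 : (WithLp.equiv 2 (Fin N → ℂ)).symm (WithLp.equiv 2 (Fin N → ℂ) v) = v := rfl
    rw [h2] at h
    simp only [hBdef] at h
    exact h.symm
  have hTvnorm : ∀ i : Fin 3, ‖T i v‖ = ‖z‖⁻¹ * ‖T i z‖ := by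
    intro i
    rw [hvdef, _root_.map_smul, norm_smul]
    simp [abs_of_pos hznorm]
  refine ⟨v, ?_, ?_, ?_⟩
  · rw [hvdef, norm_smul]
    simp only [norm_inv, Complex.norm_real, Real.norm_eq_abs, abs_of_pos hznorm]
    exact hinv
  · rw [hveq 2, hTvnorm 2]
    apply sq_le_rpow_half' (by positivity)
    have h1 : ‖T 2 z‖^2 ≤ ε2 * ‖z‖^2 := by
      nlinarith [hz2, mul_nonneg (sq_nonneg κ) (sq_nonneg ‖T 0 z‖),
        mul_nonneg (sq_nonneg κ) (sq_nonneg ‖T 1 z‖)]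
    calc (‖z‖⁻¹ * ‖T 2 z‖)^2 = (‖z‖⁻¹)^2 * ‖T 2 z‖^2 := by ring
      _ ≤ (‖z‖⁻¹)^2 * (ε2 * ‖z‖^2) := mul_le_mul_of_nonneg_left h1 (by positivity)
      _ = ε2 * (‖z‖⁻¹ * ‖z‖)^2 := by ring
      _ = μ ^ 2 + (κ ^ 2 + 2 * κ) * δ := by rw [hinv, hε2def]; ring
  · intro i hi
    rw [hveq i, hTvnorm i]
    apply sq_le_rpow_half' (by positivity)
    have hκ2 : (0:ℝ) < κ^2 := by positivity
    have hi2 : κ^2 * ‖T i z‖^2 ≤ ε2 * ‖z‖^2 := by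
      fin_cases i
      · show κ^2 * ‖T 0 z‖^2 ≤ ε2 * ‖z‖^2
        nlinarith [hz2, mul_nonneg (sq_nonneg κ) (sq_nonneg ‖T 1 z‖), sq_nonneg ‖T 2 z‖]
      · show κ^2 * ‖T 1 z‖^2 ≤ ε2 * ‖z‖^2
        nlinarith [hz2, mul_nonneg (sq_nonneg κ) (sq_nonneg ‖T 0 z‖), sq_nonneg ‖T 2 z‖]
      · simp at hi
    have h3 : ‖T i z‖^2 ≤ ε2 / κ^2 * ‖z‖^2 := by
      rw [div_mul_eq_mul_div, le_div_iff₀ hκ2]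
      nlinarith [hi2]
    have hgoal : (μ / κ) ^ 2 + (1 + 2 / κ) * δ = ε2 / κ^2 := by
      rw [hε2def]
      field_simp
    rw [hgoal]
    calc (‖z‖⁻¹ * ‖T i z‖)^2 = (‖z‖⁻¹)^2 * ‖T i z‖^2 := by ring
      _ ≤ (‖z‖⁻¹)^2 * (ε2 / κ^2 * ‖z‖^2) := mul_le_mul_of_nonneg_left h3 (by positivity)
      _ = ε2 / κ^2 * (‖z‖⁻¹ * ‖z‖)^2 := by ring
      _ = ε2 / κ^2 := by rw [hinv]; ring
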